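/- Let X_1, ..., X_M be i.i.d. {±1}-valued random variables with P(X_i = -1) = q < 1/2, and let ε := 1/2 - q. Then the probability that the majority vote is incorrect satisfies P(∑_{i=1}^M X_i ≤ 0) ≤ 1/(1 + M/(1/(4ε²) - 1)). -/

import Mathlib

open MeasureTheory ProbabilityTheory Finset

set_option maxHeartbeats 1600000

/-- Majority-vote failure probability: for i.i.d. `±1`-valued random variables with
`P(X_i = -1) = q < 1/2` and `ε = 1/2 - q`,
`P(∑ X_i ≤ 0) ≤ 1/(1 + M/(1/(4ε²) - 1))`. -/
theorem stmt_15 {Ω : Type*} [MeasureSpace Ω] (hP : IsProbabilityMeasure (volume : Measure Ω))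
    (M : ℕ) (hM : 0 < M) (X : Fin M → Ω → ℝ)
    (hval : ∀ i ω, X i ω = 1 ∨ X i ω = -1)
    (hmeas : ∀ i, Measurable (X i))
    (hindep : iIndepFun X volume)
    (hident : ∀ i j : Fin M, Measure.map (X i) volume = Measure.map (X j) volume)
    (q : ℝ) (hq0 : 0 ≤ q) (hq : q < 1 / 2)
    (hqval : ∀ i, (volume {ω | X i ω = -1}).toReal = q)
    (ε : ℝ) (hε : ε = 1 / 2 - q) :
    (volume {ω | ∑ i, X i ω ≤ 0}).toReal ≤
      1 / (1 + (M : ℝ) / (1 / (4 * ε ^ 2) - 1)) := by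
  have htoReal_le_one : (volume {ω | ∑ i, X i ω ≤ 0}).toReal ≤ 1 := by
    have h1 := prob_le_one (μ := (volume : Measure Ω)) (s := {ω | ∑ i, X i ω ≤ 0})
    simpa using ENNReal.toReal_mono ENNReal.one_ne_top h1
  rcases eq_or_lt_of_le hq0 with hq0' | hq0'
  · -- q = 0 : RHS is 1
    have hε2 : ε = 1/2 := by rw [hε, ← hq0']; ring
    rw [hε2]
    norm_num
    exact htoReal_le_one
  -- main case 0 < q
  have hεpos : 0 < ε := by rw [hε]; linarith
  -- L² membership and integrability
  have hL2 : ∀ i, MemLp (X i) 2 (volume : Measure Ω) := fun i =>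
    MemLp.of_bound (hmeas i).aestronglyMeasurable 1
      (ae_of_all _ fun ω => by rcases hval i ω with h | h <;> simp [h])
  have hInt : ∀ i, Integrable (X i) (volume : Measure Ω) := fun i =>
    (hL2 i).integrable one_le_two
  have hA : ∀ i, MeasurableSet {ω | X i ω = -1} := fun i =>
    (hmeas i) (measurableSet_singleton (-1))
  -- expectation of each X i
  have hEX : ∀ i, ∫ ω, X i ω = 1 - 2 * q := by
    intro i
    have hXeq : X i = fun ω => 1 - Set.indicator {ω | X i ω = -1} (fun _ => (2:ℝ)) ω := by
      funext ω
      rcases hval i ω with h | h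
      · have : ω ∉ {ω | X i ω = -1} := by simp [h]; norm_num
        simp [Set.indicator_of_notMem this, h]
      · have : ω ∈ {ω | X i ω = -1} := h
        rw [Set.indicator_of_mem this, h]; norm_num
    have hgInt : Integrable (Set.indicator {ω | X i ω = -1} (fun _ => (2:ℝ)))
        (volume : Measure Ω) := (integrable_const (2:ℝ)).indicator (hA i)
    rw [hXeq, integral_sub (integrable_const 1) hgInt,
      MeasureTheory.integral_indicator_const _ (hA i), integral_const]
    simp [hqval i]
    rw [measureReal_def, hqval i]
    ring
  -- second moment of each X i
  have hEX2 : ∀ i, ∫ ω, (X i ^ 2) ω = 1 := by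
    intro i
    have : (X i ^ 2) = fun _ : Ω => (1:ℝ) := by
      funext ω
      rcases hval i ω with h | h <;> simp [h]
    rw [this]; simp
  -- variance of each X i
  have hvar : ∀ i, variance (X i) (volume : Measure Ω) = 1 - (1 - 2*q)^2 := by
    intro i
    rw [variance_eq_sub (hL2 i), hEX2 i, hEX i]
  -- the sum
  set S : Ω → ℝ := ∑ i, X i with hS
  have hSapp : ∀ ω, S ω = ∑ i, X i ω := fun ω => by simp [hS]
  have hSL2 : MemLp S 2 (volume : Measure Ω) := memLp_finset_sum' _ fun i _ => hL2 i
  have hSInt : Integrable S (volume : Measure Ω) := hSL2.integrable one_le_two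
  set m : ℝ := M * (1 - 2*q) with hm
  set v : ℝ := M * (1 - (1 - 2*q)^2) with hv
  have hmpos : 0 < m := by
    have : (0:ℝ) < M := Nat.cast_pos.2 hM
    have : (0:ℝ) < 1 - 2*q := by linarith
    positivity
  have hvpos : 0 < v := by
    have h1 : (0:ℝ) < M := Nat.cast_pos.2 hM
    have h2 : (0:ℝ) < 1 - (1-2*q)^2 := by nlinarith
    positivity
  have hES : ∫ ω, S ω = m := by
    have : ∫ ω, S ω = ∑ i, ∫ ω, X i ω := by
      simp only [hSapp]
      exact integral_finset_sum _ fun i _ => hInt i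
    rw [this]
    simp [hEX, hm, mul_comm]
    ring
  have hvarS : variance S (volume : Measure Ω) = v := by
    rw [hS, IndepFun.variance_sum (fun i _ => hL2 i)
      (fun i _ j _ hij => hindep.indepFun hij)]
    simp [hvar, hv, mul_comm]
    ring
  have hES2 : ∫ ω, (S ω)^2 = v + m^2 := by
    have h := variance_eq_sub hSL2
    rw [hvarS, hES] at h
    have h2 : ∫ ω, (S ^ 2) ω = ∫ ω, (S ω)^2 := by simp [Pi.pow_apply]
    rw [h2] at h
    linarith
  have hSInt2 : Integrable (fun ω => (S ω)^2) (volume : Measure Ω) := hSL2.integrable_sq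
  -- Cantelli via Markov
  set c : ℝ := m + v / m with hc
  have hcpos : 0 < c := by positivity
  have hfInt : Integrable (fun ω => (S ω - c)^2) (volume : Measure Ω) := by
    have : (fun ω => (S ω - c)^2) = fun ω => (S ω)^2 - 2*c*S ω + c^2 := by
      funext ω; ring
    rw [this]
    exact (hSInt2.sub (hSInt.const_mul _)).add (integrable_const _)
  have hfcalc : ∫ ω, (S ω - c)^2 = v + (v/m)^2 := by
    have h : (fun ω => (S ω - c)^2) = fun ω => (S ω)^2 - 2*c*S ω + c^2 := by
      funext ω; ring
    have i1 : Integrable (fun ω => S ω ^ 2 - 2*c*S ω) (volume : Measure Ω) :=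
      hSInt2.sub (hSInt.const_mul _)
    have i2 : Integrable (fun ω => 2*c*S ω) (volume : Measure Ω) := hSInt.const_mul _
    rw [h, integral_add i1 (integrable_const _), integral_sub hSInt2 i2,
      integral_const_mul, hES2, hES, integral_const]
    simp only [measure_univ, probReal_univ, ENNReal.toReal_one, smul_eq_mul, one_mul]
    rw [hc]
    have hm' : m ≠ 0 := hmpos.ne'
    field_simp
    ring
  have hsubset : {ω | ∑ i, X i ω ≤ 0} ⊆ {ω | c^2 ≤ (S ω - c)^2} := by
    intro ω hω
    have hω' : S ω ≤ 0 := by rw [hSapp]; exact hω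
    show c^2 ≤ (S ω - c)^2
    nlinarith [sq_nonneg (S ω), mul_nonneg hcpos.le (neg_nonneg.2 hω')]
  have hmono : (volume {ω | ∑ i, X i ω ≤ 0}).toReal ≤
      (volume {ω | c^2 ≤ (S ω - c)^2}).toReal :=
    ENNReal.toReal_mono (measure_ne_top _ _) (measure_mono hsubset)
  have hmarkov := mul_meas_ge_le_integral_of_nonneg
    (ae_of_all _ fun ω => sq_nonneg (S ω - c)) hfInt (c^2)
  rw [hfcalc] at hmarkov
  have hkey : (volume {ω | ∑ i, X i ω ≤ 0}).toReal ≤ (v + (v/m)^2) / c^2 := by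
    have hc2 : 0 < c^2 := by positivity
    rw [le_div_iff₀ hc2]
    calc (volume {ω | ∑ i, X i ω ≤ 0}).toReal * c^2
        ≤ (volume {ω | c^2 ≤ (S ω - c)^2}).toReal * c^2 := by
          exact mul_le_mul_of_nonneg_right hmono hc2.le
      _ = c^2 * (volume {ω | c^2 ≤ (S ω - c)^2}).toReal := by ring
      _ ≤ v + (v/m)^2 := hmarkov
  refine hkey.trans (le_of_eq ?_)
  -- algebra
  set r : ℝ := (1 - 2*q)^2 with hr
  have hM0 : (0:ℝ) < M := Nat.cast_pos.2 hM
  have hr0 : 0 < r := by rw [hr]; nlinarith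
  have hr1 : r < 1 := by rw [hr]; nlinarith
  have hv' : v = M * (1 - r) := by rw [hv, hr]
  have hm2 : m^2 = M^2 * r := by rw [hm, hr]; ring
  have h1 : (v + (v/m)^2) / c^2 = v / (v + m^2) := by
    rw [hc]
    have hm' : m ≠ 0 := hmpos.ne'
    have hvm : v + m^2 ≠ 0 := by positivity
    field_simp
    ring
  have h2 : v / (v + m^2) = (1 - r) / (1 - r + M * r) := by
    have hden : v + m^2 = M * (1 - r + M * r) := by rw [hv', hm2]; ring
    rw [hden, hv', mul_div_mul_left _ _ hM0.ne']
  have h3 : 1 / (1 + (M:ℝ) / (1 / (4 * ε ^ 2) - 1)) = (1 - r) / (1 - r + M * r) := by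
    have h4 : 4 * ε^2 = r := by rw [hε, hr]; ring
    rw [h4]
    have h5 : (1:ℝ)/r - 1 = (1 - r)/r := by field_simp
    rw [h5]
    have h6 : (0:ℝ) < 1 - r := by linarith
    have h7 : (0:ℝ) < 1 - r + M * r := by positivity
    rw [div_div_eq_mul_div]
    rw [show (1:ℝ) + M * r / (1 - r) = (1 - r + M * r) / (1 - r) by field_simp]
    rw [one_div_div]
  rw [h1, h2, h3]
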